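/- Suppose H = (H₁; H₂) is a nontrivial BSHM(n,ℓ,a,b) with respect to H₁ (so 1 < ℓ < n−1), where b ≠ a, b ≠ −a, the values a and b are both attained, and H₁𝟙 = 0 (H has Type 1). Then: (H₂𝟙)·(H₂𝟙) = n²; n(ℓ + ab) = (ℓ−a)(ℓ−b); ab ≤ 0; b−a divides each of ℓ−b and n; 2(b−a) divides n(b+1); (b−a)² divides nb(b+1); k_a(i) = (ℓ−b)/(b−a) + nb/(b−a) for every i; and the associated graph of H with respect to H₁ is strongly regular with parameters (v,k,λ,μ) = (n, (ℓ−b+nb)/(b−a), nb(b+1)/(b−a)² + (2(ℓ−b)−n)/(b−a), nb(b+1)/(b−a)²). -/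

import Mathlib

set_option maxHeartbeats 1000000


open Matrix Finset

/-- A Hadamard matrix of order `n`: entries in `{1,-1}` and `Hᵀ * H = n • 1`. -/
def IsHadamard {n : ℕ} (H : Matrix (Fin n) (Fin n) ℤ) : Prop :=
  (∀ i j, H i j = 1 ∨ H i j = -1) ∧ Hᵀ * H = (n : ℤ) • 1

/-- Dot product of columns `j` and `k` of the submatrix of `H` formed by the rows in `R`. -/
def colDot {n : ℕ} (H : Matrix (Fin n) (Fin n) ℤ) (R : Finset (Fin n)) (j k : Fin n) : ℤ :=
  ∑ i ∈ R, H i j * H i k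

/-- `H` is a balanced splittable Hadamard matrix with respect to the submatrix formed by the
rows in `R`, with values `a, b`. -/
def IsBSHM {n : ℕ} (H : Matrix (Fin n) (Fin n) ℤ) (R : Finset (Fin n)) (a b : ℤ) : Prop :=
  _root_.IsHadamard H ∧ ∀ j k : Fin n, j ≠ k → colDot H R j k = a ∨ colDot H R j k = b

/-- `kA H R a i` is the number of columns `j ≠ i` whose dot product with column `i`
(in the submatrix with rows `R`) equals `a`. -/
def kA {n : ℕ} (H : Matrix (Fin n) (Fin n) ℤ) (R : Finset (Fin n)) (a : ℤ) (i : Fin n) : ℕ :=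
  (univ.filter fun j => j ≠ i ∧ colDot H R i j = a).card

/-- The associated graph (vertices `Fin n`, with `i ~ j` iff `i ≠ j` and columns `i`, `j` of the
submatrix with rows `R` have dot product `a`) is strongly regular with parameters
`(v, k, lam, mu)`. -/
def AssociatedGraphIsSRG {n : ℕ} (H : Matrix (Fin n) (Fin n) ℤ) (R : Finset (Fin n)) (a : ℤ)
    (v k lam mu : ℕ) : Prop :=
  n = v ∧
  (∀ i : Fin n, (univ.filter fun j => i ≠ j ∧ colDot H R i j = a).card = k) ∧
  (∀ i j : Fin n, i ≠ j → colDot H R i j = a →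
    (univ.filter fun x =>
      (i ≠ x ∧ colDot H R i x = a) ∧ (j ≠ x ∧ colDot H R j x = a)).card = lam) ∧
  (∀ i j : Fin n, i ≠ j → colDot H R i j ≠ a →
    (univ.filter fun x =>
      (i ≠ x ∧ colDot H R i x = a) ∧ (j ≠ x ∧ colDot H R j x = a)).card = mu)


lemma sum_two_val {n : ℕ} (T : Finset (Fin n)) (f h : Fin n → ℤ) (a b : ℤ)
    (hf : ∀ x ∈ T, f x = a ∨ f x = b) :
    ∑ x ∈ T, (f x - b) * h x = (a - b) * ∑ x ∈ T.filter (fun x => f x = a), h x := by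
  rw [← Finset.sum_filter_add_sum_filter_not T (fun x => f x = a)]
  have h1 : ∑ x ∈ T.filter (fun x => f x = a), (f x - b) * h x
      = (a - b) * ∑ x ∈ T.filter (fun x => f x = a), h x := by
    rw [Finset.mul_sum]
    refine Finset.sum_congr rfl ?_
    intro x hx
    rw [(Finset.mem_filter.mp hx).2]
  have h2 : ∑ x ∈ T.filter (fun x => ¬ f x = a), (f x - b) * h x = 0 := by
    refine Finset.sum_eq_zero ?_
    intro x hx
    rcases Finset.mem_filter.mp hx with ⟨hxT, hxa⟩
    rcases hf x hxT with h | h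
    · exact absurd h hxa
    · rw [h]; ring
  rw [h1, h2, add_zero]

lemma sum_two_val_card {n : ℕ} (T : Finset (Fin n)) (f : Fin n → ℤ) (a b : ℤ)
    (hf : ∀ x ∈ T, f x = a ∨ f x = b) :
    ∑ x ∈ T, (f x - b) = (a - b) * ((T.filter (fun x => f x = a)).card : ℤ) := by
  have := sum_two_val T f (fun _ => 1) a b hf
  simpa using this

lemma sum_two_val2 {n : ℕ} (T : Finset (Fin n)) (f g : Fin n → ℤ) (a b : ℤ)
    (hf : ∀ x ∈ T, f x = a ∨ f x = b) (hg : ∀ x ∈ T, g x = a ∨ g x = b) :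
    ∑ x ∈ T, (f x - b) * (g x - b)
      = (a - b) ^ 2 * ((T.filter (fun x => f x = a ∧ g x = a)).card : ℤ) := by
  rw [sum_two_val T f (fun x => g x - b) a b hf]
  rw [sum_two_val_card (T.filter (fun x => f x = a)) g a b
    (fun x hx => hg x (Finset.mem_filter.mp hx).1)]
  rw [Finset.filter_filter]
  ring


lemma had_rows {n : ℕ} {H : Matrix (Fin n) (Fin n) ℤ}
    (hH : Hᵀ * H = (n : ℤ) • 1) (r s : Fin n) :
    ∑ x, H r x * H s x = if r = s then (n : ℤ) else 0 := by
  rcases Nat.eq_zero_or_pos n with h0 | hpos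
  · subst h0; exact r.elim0
  · have hn : ((n : ℚ)) ≠ 0 := by positivity
    set A : Matrix (Fin n) (Fin n) ℚ := H.map (Int.cast : ℤ → ℚ) with hA
    have h1 : Aᵀ * A = (n : ℚ) • 1 := by
      ext i j
      have h := congrFun (congrFun hH i) j
      simp only [Matrix.mul_apply, Matrix.smul_apply, Matrix.one_apply,
        Matrix.transpose_apply, smul_eq_mul] at h ⊢
      by_cases hij : i = j <;> simp [hij, hA] at h ⊢ <;> exact_mod_cast h
    have h2 : ((n : ℚ)⁻¹ • Aᵀ) * A = 1 := by
      rw [Matrix.smul_mul, h1, smul_smul, inv_mul_cancel₀ hn, one_smul]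
    have h3 : A * ((n : ℚ)⁻¹ • Aᵀ) = 1 := mul_eq_one_comm.mp h2
    have h4 := congrFun (congrFun h3 r) s
    simp only [Matrix.mul_apply, Matrix.smul_apply, Matrix.one_apply,
      Matrix.transpose_apply, smul_eq_mul] at h4
    have h5 : ∑ x, A r x * A s x = (n : ℚ) * if r = s then 1 else 0 := by
      rw [← h4, Finset.mul_sum]
      refine Finset.sum_congr rfl fun x _ => ?_
      field_simp
    have h6 : ((∑ x, H r x * H s x : ℤ) : ℚ) = (n : ℚ) * if r = s then 1 else 0 := by
      rw [← h5]
      push_cast [hA]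
      rfl
    by_cases hrs : r = s <;> simp [hrs] at h6 ⊢ <;> exact_mod_cast h6

lemma had_cols {n : ℕ} {H : Matrix (Fin n) (Fin n) ℤ}
    (hH : Hᵀ * H = (n : ℤ) • 1) {j k : Fin n} (hjk : j ≠ k) :
    ∑ i, H i j * H i k = 0 := by
  have := congrFun (congrFun hH j) k
  simp only [Matrix.mul_apply, Matrix.smul_apply, Matrix.one_apply,
    Matrix.transpose_apply, smul_eq_mul] at this
  simpa [hjk, mul_comm] using this



lemma colDot_comm {n : ℕ} (H : Matrix (Fin n) (Fin n) ℤ) (R : Finset (Fin n)) (j k : Fin n) :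
    colDot H R j k = colDot H R k j := by
  unfold colDot; exact Finset.sum_congr rfl fun i _ => mul_comm _ _

lemma colDot_self {n : ℕ} {H : Matrix (Fin n) (Fin n) ℤ} (R : Finset (Fin n))
    (hent : ∀ i j, H i j = 1 ∨ H i j = -1) (j : Fin n) :
    colDot H R j j = (R.card : ℤ) := by
  unfold colDot
  rw [Finset.sum_congr rfl (fun i _ => ?_), Finset.sum_const, nsmul_eq_mul, mul_one]
  rcases hent i j with h | h <;> rw [h] <;> norm_num

lemma sum_colDot {n : ℕ} {H : Matrix (Fin n) (Fin n) ℤ} {R : Finset (Fin n)}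
    (hType1 : ∀ i ∈ R, ∑ j, H i j = 0) (j : Fin n) :
    ∑ x, colDot H R j x = 0 := by
  unfold colDot
  rw [Finset.sum_comm]
  refine Finset.sum_eq_zero fun i hi => ?_
  rw [← Finset.mul_sum, hType1 i hi, mul_zero]

lemma sum_colDot_mul {n : ℕ} {H : Matrix (Fin n) (Fin n) ℤ}
    (hH : Hᵀ * H = (n : ℤ) • 1) (R : Finset (Fin n)) (i j : Fin n) :
    ∑ x, colDot H R i x * colDot H R j x = (n : ℤ) * colDot H R i j := by
  unfold colDot
  have step1 : ∀ x, (∑ r ∈ R, H r i * H r x) * (∑ s ∈ R, H s j * H s x)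
      = ∑ r ∈ R, ∑ s ∈ R, (H r i * H s j) * (H r x * H s x) := by
    intro x
    rw [Finset.sum_mul_sum]
    exact Finset.sum_congr rfl fun r _ => Finset.sum_congr rfl fun s _ => by ring
  calc ∑ x, (∑ r ∈ R, H r i * H r x) * (∑ s ∈ R, H s j * H s x)
      = ∑ x, ∑ r ∈ R, ∑ s ∈ R, (H r i * H s j) * (H r x * H s x) :=
        Finset.sum_congr rfl fun x _ => step1 x
    _ = ∑ r ∈ R, ∑ x, ∑ s ∈ R, (H r i * H s j) * (H r x * H s x) := Finset.sum_comm
    _ = ∑ r ∈ R, ∑ s ∈ R, ∑ x, (H r i * H s j) * (H r x * H s x) :=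
        Finset.sum_congr rfl fun r _ => Finset.sum_comm
    _ = ∑ r ∈ R, ∑ s ∈ R, (H r i * H s j) * (if r = s then (n:ℤ) else 0) := by
        refine Finset.sum_congr rfl fun r _ => Finset.sum_congr rfl fun s _ => ?_
        rw [← Finset.mul_sum, had_rows hH r s]
    _ = ∑ r ∈ R, ∑ s ∈ R, (if r = s then (H r i * H s j) * (n:ℤ) else 0) := by
        refine Finset.sum_congr rfl fun r _ => Finset.sum_congr rfl fun s _ => ?_
        split <;> simp
    _ = ∑ r ∈ R, (H r i * H r j) * (n:ℤ) := by
        refine Finset.sum_congr rfl fun r hr => ?_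
        rw [Finset.sum_ite_eq R r (fun s => H r i * H s j * (n:ℤ)), if_pos hr]
    _ = (n : ℤ) * ∑ r ∈ R, H r i * H r j := by rw [Finset.mul_sum]; exact Finset.sum_congr rfl fun r _ => by ring

lemma sum_colDot_mul_row {n : ℕ} {H : Matrix (Fin n) (Fin n) ℤ}
    (hH : Hᵀ * H = (n : ℤ) • 1) {R : Finset (Fin n)} {i₀ : Fin n} (hi₀ : i₀ ∈ R) (j : Fin n) :
    ∑ x, colDot H R j x * H i₀ x = (n : ℤ) * H i₀ j := by
  unfold colDot
  calc ∑ x, (∑ r ∈ R, H r j * H r x) * H i₀ x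
      = ∑ x, ∑ r ∈ R, (H r j) * (H r x * H i₀ x) := by
        refine Finset.sum_congr rfl fun x _ => ?_
        rw [Finset.sum_mul]
        exact Finset.sum_congr rfl fun r _ => by ring
    _ = ∑ r ∈ R, (H r j) * ∑ x, (H r x * H i₀ x) := by
        rw [Finset.sum_comm]
        exact Finset.sum_congr rfl fun r _ => by rw [Finset.mul_sum]
    _ = ∑ r ∈ R, (if r = i₀ then (H r j) * (n:ℤ) else 0) := by
        refine Finset.sum_congr rfl fun r _ => ?_
        rw [had_rows hH r i₀]
        split <;> simp
    _ = (n : ℤ) * H i₀ j := by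
        rw [Finset.sum_ite_eq' R i₀ (fun r => H r j * (n:ℤ)), if_pos hi₀, mul_comm]

theorem stmt7 {n ℓ : ℕ} (a b : ℤ) (H : Matrix (Fin n) (Fin n) ℤ)
    (R : Finset (Fin n)) (hRcard : R.card = ℓ) (h1 : 1 < ℓ) (h2 : ℓ < n - 1)
    (hba : b ≠ a) (hbna : b ≠ -a)
    (hbshm : IsBSHM H R a b)
    (haAtt : ∃ j k, j ≠ k ∧ colDot H R j k = a)
    (hbAtt : ∃ j k, j ≠ k ∧ colDot H R j k = b)
    (hType1 : ∀ i ∈ R, ∑ j, H i j = 0) :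
    (∑ i ∈ Rᶜ, (∑ j, H i j) ^ 2) = (n : ℤ) ^ 2 ∧
    (n : ℤ) * ((ℓ : ℤ) + a * b) = ((ℓ : ℤ) - a) * ((ℓ : ℤ) - b) ∧
    a * b ≤ 0 ∧
    (b - a) ∣ ((ℓ : ℤ) - b) ∧
    (b - a) ∣ (n : ℤ) ∧
    (2 * (b - a)) ∣ ((n : ℤ) * (b + 1)) ∧
    ((b - a) ^ 2) ∣ ((n : ℤ) * b * (b + 1)) ∧
    (∀ i : Fin n, (kA H R a i : ℚ) =
      ((ℓ : ℚ) - (b : ℚ)) / ((b : ℚ) - (a : ℚ)) +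
        (n : ℚ) * (b : ℚ) / ((b : ℚ) - (a : ℚ))) ∧
    (∃ k lam mu : ℕ, AssociatedGraphIsSRG H R a n k lam mu ∧
      (k : ℚ) = ((ℓ : ℚ) - (b : ℚ) + (n : ℚ) * (b : ℚ)) / ((b : ℚ) - (a : ℚ)) ∧
      (lam : ℚ) = (n : ℚ) * (b : ℚ) * ((b : ℚ) + 1) / ((b : ℚ) - (a : ℚ)) ^ 2 +
        (2 * ((ℓ : ℚ) - (b : ℚ)) - (n : ℚ)) / ((b : ℚ) - (a : ℚ)) ∧
      (mu : ℚ) = (n : ℚ) * (b : ℚ) * ((b : ℚ) + 1) / ((b : ℚ) - (a : ℚ)) ^ 2) := by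
  obtain ⟨⟨hent, hHad⟩, hpair⟩ := hbshm
  have hn4 : 4 ≤ n := by omega
  have hd0 : b - a ≠ 0 := sub_ne_zero.mpr hba
  have had0 : a - b ≠ 0 := sub_ne_zero.mpr (fun h => hba h.symm)
  have hRne : R.Nonempty := Finset.card_pos.mp (by omega)
  obtain ⟨i₀, hi₀⟩ := hRne
  have Fself : ∀ j, colDot H R j j = (ℓ:ℤ) := fun j => by
    rw [colDot_self R hent j, hRcard]
  have Fsum : ∀ j, ∑ x, colDot H R j x = 0 := sum_colDot hType1
  have Fsq : ∀ i j : Fin n, ∑ x, colDot H R i x * colDot H R j x = (n:ℤ) * colDot H R i j :=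
    fun i j => sum_colDot_mul hHad R i j
  have Fcomm : ∀ j k : Fin n, colDot H R j k = colDot H R k j := colDot_comm H R
  have hcardE : ∀ i : Fin n, ((univ.erase i).card : ℤ) = (n:ℤ) - 1 := fun i => by
    rw [Finset.card_erase_of_mem (Finset.mem_univ i), Finset.card_univ, Fintype.card_fin]
    omega
  have hsumE : ∀ i : Fin n, ∑ x ∈ univ.erase i, colDot H R i x = -(ℓ:ℤ) := fun i => by
    have h2 := Finset.sum_erase_add univ (fun x => colDot H R i x) (Finset.mem_univ i)
    rw [Fsum i, Fself i] at h2
    linarith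
  -- E1 : per-vertex degree equation
  have E1 : ∀ i : Fin n, (a - b) * (kA H R a i : ℤ) = -(ℓ:ℤ) - ((n:ℤ) - 1) * b := by
    intro i
    have hsub : ∀ x ∈ univ.erase i, colDot H R i x = a ∨ colDot H R i x = b :=
      fun x hx => hpair i x (Ne.symm (Finset.ne_of_mem_erase hx))
    have h := sum_two_val_card (univ.erase i) (fun x => colDot H R i x) a b hsub
    have hfilt : (univ.erase i).filter (fun x => colDot H R i x = a)
        = univ.filter (fun j => j ≠ i ∧ colDot H R i j = a) := by
      ext x
      simp only [Finset.mem_filter, Finset.mem_erase, Finset.mem_univ, true_and,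
        and_true] <;> tauto
    have hsum2 : ∑ x ∈ univ.erase i, (colDot H R i x - b)
        = -(ℓ:ℤ) - ((n:ℤ) - 1) * b := by
      rw [Finset.sum_sub_distrib, hsumE i, Finset.sum_const, nsmul_eq_mul, hcardE i] <;> ring
    rw [hsum2, hfilt] at h
    unfold kA
    linarith [h]
  -- main identity
  have hmain : (n:ℤ) * ((ℓ:ℤ) + a * b) = ((ℓ:ℤ) - a) * ((ℓ:ℤ) - b) := by
    have i : Fin n := ⟨0, by omega⟩
    have hzero : ∑ x ∈ univ.erase i, (colDot H R i x - a) * (colDot H R i x - b) = 0 :=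
      Finset.sum_eq_zero fun x hx => by
        rcases hpair i x (Ne.symm (Finset.ne_of_mem_erase hx)) with h | h <;> rw [h] <;> ring
    have hsqE : ∑ x ∈ univ.erase i, colDot H R i x * colDot H R i x
        = (n:ℤ)*(ℓ:ℤ) - (ℓ:ℤ)*(ℓ:ℤ) := by
      have h2 := Finset.sum_erase_add univ (fun x => colDot H R i x * colDot H R i x)
        (Finset.mem_univ i)
      rw [Fsq i i, Fself i] at h2
      linarith
    have hexp : ∑ x ∈ univ.erase i, (colDot H R i x - a) * (colDot H R i x - b)
        = ((n:ℤ)*(ℓ:ℤ) - (ℓ:ℤ)*(ℓ:ℤ)) - (a + b) * (-(ℓ:ℤ)) + ((n:ℤ) - 1) * (a * b) := by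
      calc ∑ x ∈ univ.erase i, (colDot H R i x - a) * (colDot H R i x - b)
          = ∑ x ∈ univ.erase i, (colDot H R i x * colDot H R i x
              - (a + b) * colDot H R i x + a * b) :=
            Finset.sum_congr rfl fun x _ => by ring
        _ = _ := by
            rw [Finset.sum_add_distrib, Finset.sum_sub_distrib, ← Finset.mul_sum,
              Finset.sum_const, nsmul_eq_mul, hcardE i, hsqE, hsumE i]
    rw [hzero] at hexp
    linear_combination - hexp
  -- E3 : two-vertex (lambda/mu) equation
  have E3 : ∀ i j : Fin n, i ≠ j →
      (a - b)^2 * (((univ.filter fun x => (i ≠ x ∧ colDot H R i x = a)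
          ∧ (j ≠ x ∧ colDot H R j x = a)).card : ℤ))
        = (n:ℤ) * colDot H R i j + (n:ℤ) * b^2
          - 2*((ℓ:ℤ) - b)*(colDot H R i j - b) := by
    intro i j hij
    have hmemT : ∀ x ∈ (univ.erase i).erase j, x ≠ i ∧ x ≠ j := fun x hx =>
      ⟨Finset.ne_of_mem_erase (Finset.mem_of_mem_erase hx), Finset.ne_of_mem_erase hx⟩
    have h := sum_two_val2 ((univ.erase i).erase j)
      (fun x => colDot H R i x) (fun x => colDot H R j x) a b
      (fun x hx => hpair i x (Ne.symm (hmemT x hx).1))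
      (fun x hx => hpair j x (Ne.symm (hmemT x hx).2))
    have hfilt : ((univ.erase i).erase j).filter
          (fun x => colDot H R i x = a ∧ colDot H R j x = a)
        = univ.filter (fun x => (i ≠ x ∧ colDot H R i x = a)
            ∧ (j ≠ x ∧ colDot H R j x = a)) := by
      ext x
      simp only [Finset.mem_filter, Finset.mem_erase, Finset.mem_univ, true_and, and_true]
      constructor
      · rintro ⟨⟨hxj, hxi⟩, h1, h2⟩; exact ⟨⟨Ne.symm hxi, h1⟩, Ne.symm hxj, h2⟩
      · rintro ⟨⟨hxi, h1⟩, hxj, h2⟩; exact ⟨⟨Ne.symm hxj, Ne.symm hxi⟩, h1, h2⟩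
    have hsall : ∑ x, (colDot H R i x - b) * (colDot H R j x - b)
        = (n:ℤ) * colDot H R i j + (n:ℤ) * (b*b) := by
      calc ∑ x, (colDot H R i x - b) * (colDot H R j x - b)
          = ∑ x, (colDot H R i x * colDot H R j x - b * colDot H R i x
              - b * colDot H R j x + b*b) :=
            Finset.sum_congr rfl fun x _ => by ring
        _ = _ := by
            rw [Finset.sum_add_distrib, Finset.sum_sub_distrib, Finset.sum_sub_distrib,
              ← Finset.mul_sum, ← Finset.mul_sum, Fsq i j, Fsum i, Fsum j,
              Finset.sum_const, Finset.card_univ, Fintype.card_fin, nsmul_eq_mul]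
            ring
    have h1 := Finset.sum_erase_add (univ.erase i)
      (fun x => (colDot H R i x - b) * (colDot H R j x - b))
      (Finset.mem_erase.mpr ⟨Ne.symm hij, Finset.mem_univ j⟩)
    have h2 := Finset.sum_erase_add univ
      (fun x => (colDot H R i x - b) * (colDot H R j x - b)) (Finset.mem_univ i)
    rw [hsall, Fself i, Fcomm j i] at h2
    rw [Fself j] at h1
    rw [hfilt] at h
    linear_combination h1 + h2 - h
  -- E4 : rows of H₁ are eigenvectors
  have E4 : ∀ j : Fin n,
      (b - a) * (∑ x ∈ univ.filter (fun x => x ≠ j ∧ colDot H R j x = a), H i₀ x)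
        = ((ℓ:ℤ) - b - (n:ℤ)) * H i₀ j := by
    intro j
    have hsub : ∀ x ∈ univ.erase j, colDot H R j x = a ∨ colDot H R j x = b :=
      fun x hx => hpair j x (Ne.symm (Finset.ne_of_mem_erase hx))
    have h := sum_two_val (univ.erase j) (fun x => colDot H R j x) (fun x => H i₀ x) a b hsub
    have hfilt : (univ.erase j).filter (fun x => colDot H R j x = a)
        = univ.filter (fun x => x ≠ j ∧ colDot H R j x = a) := by
      ext x
      simp only [Finset.mem_filter, Finset.mem_erase, Finset.mem_univ, true_and,
        and_true] <;> tauto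
    have hrow : ∑ x, H i₀ x = 0 := hType1 i₀ hi₀
    have hall : ∑ x, (colDot H R j x - b) * H i₀ x = (n:ℤ) * H i₀ j := by
      calc ∑ x, (colDot H R j x - b) * H i₀ x
          = ∑ x, (colDot H R j x * H i₀ x - b * H i₀ x) :=
            Finset.sum_congr rfl fun x _ => by ring
        _ = _ := by
            rw [Finset.sum_sub_distrib, ← Finset.mul_sum, sum_colDot_mul_row hHad hi₀ j, hrow]
            ring
    have h2 := Finset.sum_erase_add univ
      (fun x => (colDot H R j x - b) * H i₀ x) (Finset.mem_univ j)
    rw [hall, Fself j] at h2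
    rw [hfilt] at h
    linear_combination h - h2
  -- attained pairs, lam and mu
  obtain ⟨ja, ka, hjka, hja⟩ := haAtt
  obtain ⟨jb, kb, hjkb, hjb⟩ := hbAtt
  set lam : ℕ := (univ.filter fun x => (ja ≠ x ∧ colDot H R ja x = a)
      ∧ (ka ≠ x ∧ colDot H R ka x = a)).card with hlamdef
  set mu : ℕ := (univ.filter fun x => (jb ≠ x ∧ colDot H R jb x = a)
      ∧ (kb ≠ x ∧ colDot H R kb x = a)).card with hmudef
  have hlam : (a - b)^2 * (lam:ℤ) = (n:ℤ)*a + (n:ℤ)*b^2 - 2*((ℓ:ℤ)-b)*(a-b) := by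
    have h := E3 ja ka hjka
    rw [hja] at h
    rw [hlamdef]
    linear_combination h
  have hmu : (a - b)^2 * (mu:ℤ) = (n:ℤ)*b + (n:ℤ)*b^2 := by
    have h := E3 jb kb hjkb
    rw [hjb] at h
    rw [hmudef]
    linear_combination h
  have hlm : (b - a) * ((lam:ℤ) - mu) = 2*((ℓ:ℤ) - b) - (n:ℤ) := by
    have hc : (a - b) * ((a - b) * ((lam:ℤ) - mu))
        = (a - b) * ((n:ℤ) - 2*((ℓ:ℤ)-b)) := by
      linear_combination hlam - hmu
    have h := mul_left_cancel₀ had0 hc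
    linear_combination - h
  -- the fixed vertex j₀ and the eigenvalue r
  have hj0lt : 0 < n := by omega
  set j₀ : Fin n := ⟨0, hj0lt⟩ with hj₀def
  have hK : (b - a) * (kA H R a j₀ : ℤ) = (ℓ:ℤ) + ((n:ℤ) - 1) * b := by
    linear_combination - E1 j₀
  have hh2 : H i₀ j₀ * H i₀ j₀ = 1 := by rcases hent i₀ j₀ with h | h <;> rw [h] <;> ring
  have hr : (b - a) * ((∑ x ∈ univ.filter (fun x => x ≠ j₀ ∧ colDot H R j₀ x = a), H i₀ x)
      * H i₀ j₀) = (ℓ:ℤ) - b - (n:ℤ) := by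
    linear_combination (H i₀ j₀) * E4 j₀ + ((ℓ:ℤ) - b - (n:ℤ)) * hh2
  -- parity : kA j₀ ≡ r (mod 2)
  have hSmod : (∑ x ∈ univ.filter (fun x => x ≠ j₀ ∧ colDot H R j₀ x = a), H i₀ x) % 2
      = ((kA H R a j₀ : ℤ)) % 2 := by
    rw [Finset.sum_int_mod]
    have hone : ∀ x ∈ univ.filter (fun x => x ≠ j₀ ∧ colDot H R j₀ x = a), H i₀ x % 2 = 1 :=
      fun x _ => by rcases hent i₀ x with h | h <;> rw [h] <;> decide
    rw [Finset.sum_congr rfl hone, Finset.sum_const, nsmul_eq_mul, mul_one]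
    rfl
  have hrmod : ((∑ x ∈ univ.filter (fun x => x ≠ j₀ ∧ colDot H R j₀ x = a), H i₀ x)
      * H i₀ j₀) % 2
      = (∑ x ∈ univ.filter (fun x => x ≠ j₀ ∧ colDot H R j₀ x = a), H i₀ x) % 2 := by
    rcases hent i₀ j₀ with h | h <;> rw [h] <;> omega
  have hEvenKr : Even ((kA H R a j₀ : ℤ)
      - (∑ x ∈ univ.filter (fun x => x ≠ j₀ ∧ colDot H R j₀ x = a), H i₀ x) * H i₀ j₀) := by
    rw [Int.even_iff]
    omega
  obtain ⟨t, ht⟩ := hEvenKr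
  have hKr : (b - a) * ((kA H R a j₀ : ℤ)
      - (∑ x ∈ univ.filter (fun x => x ≠ j₀ ∧ colDot H R j₀ x = a), H i₀ x) * H i₀ j₀)
      = (n:ℤ) * (b + 1) := by
    linear_combination hK - hr
  -- divisibilities
  have d4 : (b - a) ∣ ((ℓ:ℤ) - b) := by
    refine ⟨(lam:ℤ) - mu - (∑ x ∈ univ.filter (fun x => x ≠ j₀ ∧ colDot H R j₀ x = a), H i₀ x)
      * H i₀ j₀, ?_⟩
    linear_combination hr - hlm
  have d5 : (b - a) ∣ (n:ℤ) := by
    refine ⟨(lam:ℤ) - mu - 2 * ((∑ x ∈ univ.filter (fun x => x ≠ j₀ ∧ colDot H R j₀ x = a),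
      H i₀ x) * H i₀ j₀), ?_⟩
    linear_combination 2 * hr - hlm
  have d6 : (2 * (b - a)) ∣ ((n:ℤ) * (b + 1)) := by
    refine ⟨t, ?_⟩
    linear_combination - hKr + (b - a) * ht
  have d7 : ((b - a)^2) ∣ ((n:ℤ) * b * (b + 1)) := by
    refine ⟨(mu:ℤ), ?_⟩
    linear_combination - hmu
  -- ab ≤ 0
  have hL2 : (2:ℤ) ≤ (ℓ:ℤ) := by exact_mod_cast h1
  have hNL : (ℓ:ℤ) + 2 ≤ (n:ℤ) := by exact_mod_cast (by omega : ℓ + 2 ≤ n)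
  have hab : a * b ≤ 0 := by
    by_contra hcon
    push_neg at hcon
    have h1 : (0:ℤ) ≤ ((n:ℤ) - (ℓ:ℤ) - 2) * (ℓ:ℤ) := mul_nonneg (by linarith) (by linarith)
    rcases mul_pos_iff.mp hcon with ⟨ha, hb⟩ | ⟨ha, hb⟩
    · have h2 : (0:ℤ) ≤ ((n:ℤ) - 3) * (a*b) := mul_nonneg (by linarith) (le_of_lt hcon)
      have h3 : (0:ℤ) < (ℓ:ℤ) * (a + b) := mul_pos (by linarith) (by linarith)
      nlinarith [hmain, h1, h2, h3, hcon]
    · have h4 : (0:ℤ) ≤ (ℓ:ℤ) * ((-a-1)*(-b-1)) :=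
        mul_nonneg (by linarith) (mul_nonneg (by linarith) (by linarith))
      have h5 : (0:ℤ) ≤ ((n:ℤ)-(ℓ:ℤ)-2) * (a*b) := mul_nonneg (by linarith) (le_of_lt hcon)
      nlinarith [hmain, h1, h4, h5, hcon]
  -- part 1
  have part1 : (∑ i ∈ Rᶜ, (∑ j, H i j) ^ 2) = (n : ℤ) ^ 2 := by
    have hcols : ∀ j k : Fin n, ∑ i, H i j * H i k = if j = k then (n:ℤ) else 0 := by
      intro j k
      have h := congrFun (congrFun hHad j) k
      simp only [Matrix.mul_apply, Matrix.smul_apply, Matrix.one_apply,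
        Matrix.transpose_apply, smul_eq_mul] at h
      by_cases hjk : j = k <;> simp [hjk] at h ⊢ <;> exact h
    have htot : ∑ i, (∑ j, H i j)^2 = (n:ℤ)^2 := by
      calc ∑ i, (∑ j, H i j)^2 = ∑ i, ∑ j, ∑ k, H i j * H i k := by
            refine Finset.sum_congr rfl fun i _ => ?_
            rw [pow_two, Finset.sum_mul_sum]
        _ = ∑ j, ∑ i, ∑ k, H i j * H i k := Finset.sum_comm
        _ = ∑ j, ∑ k, ∑ i, H i j * H i k :=
            Finset.sum_congr rfl fun j _ => Finset.sum_comm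
        _ = ∑ j, ∑ k, (if j = k then (n:ℤ) else 0) :=
            Finset.sum_congr rfl fun j _ => Finset.sum_congr rfl fun k _ => hcols j k
        _ = ∑ _j : Fin n, (n:ℤ) := by
            refine Finset.sum_congr rfl fun j _ => ?_
            rw [Finset.sum_ite_eq univ j (fun _ => (n:ℤ)), if_pos (Finset.mem_univ j)]
        _ = (n:ℤ)^2 := by
            rw [Finset.sum_const, Finset.card_univ, Fintype.card_fin, nsmul_eq_mul]
            ring
    have hsplit := Finset.sum_add_sum_compl R (fun i => (∑ j, H i j)^2)
    have hzeroR : ∑ i ∈ R, (∑ j, H i j)^2 = 0 :=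
      Finset.sum_eq_zero fun i hiR => by rw [hType1 i hiR]; ring
    rw [hzeroR, zero_add] at hsplit
    rw [hsplit, htot]
  -- rational formulas
  have hbaQ : ((b:ℚ) - (a:ℚ)) ≠ 0 :=
    sub_ne_zero.mpr (fun h => hba (by exact_mod_cast h))
  have part8 : ∀ i : Fin n, (kA H R a i : ℚ) =
      ((ℓ : ℚ) - (b : ℚ)) / ((b : ℚ) - (a : ℚ)) +
        (n : ℚ) * (b : ℚ) / ((b : ℚ) - (a : ℚ)) := by
    intro i
    have hz := E1 i
    have hzQ : ((a:ℚ) - b) * (kA H R a i : ℚ) = -(ℓ:ℚ) - ((n:ℚ) - 1)*b := by exact_mod_cast hz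
    rw [← add_div, eq_div_iff hbaQ]
    linear_combination - hzQ
  refine ⟨part1, hmain, hab, d4, d5, d6, d7, part8,
    kA H R a j₀, lam, mu, ⟨rfl, ?_, ?_, ?_⟩, ?_, ?_, ?_⟩
  · -- regularity
    intro i
    have hset : (univ.filter fun j => i ≠ j ∧ colDot H R i j = a)
        = (univ.filter fun j => j ≠ i ∧ colDot H R i j = a) := by
      ext x
      simp only [Finset.mem_filter, Finset.mem_univ, true_and]
      exact and_congr_left' ne_comm
    rw [hset]
    have h := mul_left_cancel₀ had0 ((E1 i).trans (E1 j₀).symm)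
    show kA H R a i = kA H R a j₀
    exact_mod_cast h
  · -- lambda
    intro i j hij hadj
    have h := E3 i j hij
    rw [hadj] at h
    have hc : ((a-b)^2) * (((univ.filter fun x => (i ≠ x ∧ colDot H R i x = a)
        ∧ (j ≠ x ∧ colDot H R j x = a)).card : ℤ)) = ((a-b)^2) * (lam:ℤ) := by
      linear_combination h - hlam
    have h2 := mul_left_cancel₀ (pow_ne_zero 2 had0) hc
    exact_mod_cast h2
  · -- mu
    intro i j hij hnadj
    have hb' : colDot H R i j = b := (hpair i j hij).resolve_left hnadj
    have h := E3 i j hij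
    rw [hb'] at h
    have hc : ((a-b)^2) * (((univ.filter fun x => (i ≠ x ∧ colDot H R i x = a)
        ∧ (j ≠ x ∧ colDot H R j x = a)).card : ℤ)) = ((a-b)^2) * (mu:ℤ) := by
      linear_combination h - hmu
    have h2 := mul_left_cancel₀ (pow_ne_zero 2 had0) hc
    exact_mod_cast h2
  · -- k value
    have hKQ : ((b:ℚ) - a) * (kA H R a j₀ : ℚ) = (ℓ:ℚ) + ((n:ℚ) - 1)*b := by exact_mod_cast hK
    rw [eq_div_iff hbaQ]
    linear_combination hKQ
  · -- lambda value
    have hlamQ : ((a:ℚ) - b)^2 * (lam:ℚ) = (n:ℚ)*a + (n:ℚ)*b^2 - 2*((ℓ:ℚ)-b)*((a:ℚ)-b) := by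
      exact_mod_cast hlam
    rw [div_add_div _ _ (pow_ne_zero 2 hbaQ) hbaQ,
      eq_div_iff (mul_ne_zero (pow_ne_zero 2 hbaQ) hbaQ)]
    linear_combination ((b:ℚ) - a) * hlamQ
  · -- mu value
    have hmuQ : ((a:ℚ) - b)^2 * (mu:ℚ) = (n:ℚ)*b + (n:ℚ)*b^2 := by exact_mod_cast hmu
    rw [eq_div_iff (pow_ne_zero 2 hbaQ)]
    linear_combination hmuQ
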